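/- arXiv:2603.07809 — 2 statements merged into one kernel-verified Lean document; each statement's English description precedes it below -/
import Mathlib

section
/- Let G be a finite multigraph on a vertically ordered vertex set such that every vertex has at most two edges to lower vertices and at most two edges to higher vertices, and suppose the edge set of G is partitioned into alternating cycles. Let G_1 consist of the up-edges of each cycle and G_2 of the down-edges (with respect to a fixed traversal orientation of each cycle). Then neither G_1 nor G_2 contains a cycle; that is, G_1 and G_2 are forests. -/
/-! Common definitions: vertical (multi)graphs on `Fin n` (vertices ordered by height,
vertex `v` at height `(v : ℕ)`), edges stored as pairs `(lower, upper)`. -/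

/-- Number of edges of `E` from `v` to strictly lower vertices
(i.e. edges whose upper endpoint is `v`), with multiplicity. -/
def ldeg {n : ℕ} (E : Multiset (Fin n × Fin n)) (v : Fin n) : ℕ :=
  (E.filter (fun e => e.2 = v)).card

/-- Number of edges of `E` from `v` to strictly higher vertices
(i.e. edges whose lower endpoint is `v`), with multiplicity. -/
def hdeg {n : ℕ} (E : Multiset (Fin n × Fin n)) (v : Fin n) : ℕ :=
  (E.filter (fun e => e.1 = v)).card

/-- An alternating cycle: a closed walk `w 0, w 1, …, w (2m) = w 0` whose edges
alternately go up and down (odd-indexed vertices are above both cyclic neighbours). -/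
structure AltCycle (n : ℕ) where
  m : ℕ
  pos : 0 < m
  w : ℕ → Fin n
  closed : w (2 * m) = w 0
  up : ∀ j < m, w (2 * j) < w (2 * j + 1)
  down : ∀ j < m, w (2 * j + 2) < w (2 * j + 1)

/-- The up-edges of an alternating cycle (as `(lower, upper)` pairs). -/
def AltCycle.upEdges {n : ℕ} (C : AltCycle n) : Multiset (Fin n × Fin n) :=
  (Multiset.range C.m).map (fun j => (C.w (2 * j), C.w (2 * j + 1)))

/-- The down-edges of an alternating cycle (as `(lower, upper)` pairs). -/
def AltCycle.downEdges {n : ℕ} (C : AltCycle n) : Multiset (Fin n × Fin n) :=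
  (Multiset.range C.m).map (fun j => (C.w (2 * j + 2), C.w (2 * j + 1)))

/-- All edges of an alternating cycle. -/
def AltCycle.edges {n : ℕ} (C : AltCycle n) : Multiset (Fin n × Fin n) :=
  C.upEdges + C.downEdges

/-- The edge multiset `E` can be partitioned into alternating cycles. -/
def AltPartition {n : ℕ} (E : Multiset (Fin n × Fin n)) : Prop :=
  ∃ (k : ℕ) (Cs : Fin k → AltCycle n), E = ∑ i, (Cs i).edges

/-- The undirected edge between `a` and `b`, stored as a `(lower, upper)` pair. -/
def stepEdge {n : ℕ} (a b : Fin n) : Fin n × Fin n := if a < b then (a, b) else (b, a)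

/-- `E` contains a (vertex-simple) cycle: a closed walk with pairwise distinct vertices
whose (undirected) edge multiset is contained in `E`. -/
def HasCycle {n : ℕ} (E : Multiset (Fin n × Fin n)) : Prop :=
  ∃ (len : ℕ) (w : ℕ → Fin n), 0 < len ∧ w len = w 0 ∧
    (∀ i < len, ∀ j < len, w i = w j → i = j) ∧
    ((Multiset.range len).map (fun j => stepEdge (w j) (w (j + 1)))) ≤ E

/-- Reachability (connectivity) in the multigraph with edge multiset `E`. -/
def Reach {n : ℕ} (E : Multiset (Fin n × Fin n)) (a b : Fin n) : Prop :=
  Relation.ReflTransGen (fun x y => (x, y) ∈ E ∨ (y, x) ∈ E) a b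

/-- The connected component of `v` in `E` is a single vertex or a path along
vertices of strictly increasing height. -/
def IncPathComp {n : ℕ} (E : Multiset (Fin n × Fin n)) (v : Fin n) : Prop :=
  ∃ (m : ℕ) (p : Fin (m + 1) → Fin n), StrictMono p ∧
    (∀ u, Reach E v u ↔ ∃ i, p i = u) ∧
    (∀ i : Fin m, (p i.castSucc, p i.succ) ∈ E)

/-- The edges present at stage `j` of the upward lower-star filtration:
those whose upper endpoint has height at most `j`. -/
def levelEdges {n : ℕ} (E : Multiset (Fin n × Fin n)) (j : ℕ) : Multiset (Fin n × Fin n) :=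
  E.filter (fun e => (e.2 : ℕ) ≤ j)

/-- Death time (elder rule) of the 0-dimensional class created by vertex `v` in the
upward lower-star filtration: the first height at which `v` gets connected to a
strictly lower (older) vertex, or `∞` if this never happens. -/
noncomputable def death0 {n : ℕ} (E : Multiset (Fin n × Fin n)) (v : Fin n) : ℕ∞ :=
  sInf ((fun j : ℕ => (j : ℕ∞)) '' {j : ℕ | ∃ u, u < v ∧ Reach (levelEdges E j) u v})

/-- The 0-dimensional verbose persistence diagram in the up direction: one point
per vertex, born at the height of the vertex. -/
noncomputable def diag0 {n : ℕ} (E : Multiset (Fin n × Fin n)) : Multiset (ℕ × ℕ∞) :=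
  (Finset.univ.val : Multiset (Fin n)).map (fun v : Fin n => ((v : ℕ), death0 E v))

/-- Number of edges entering at height `j` (upper endpoint of height `j`). -/
def edgesAt {n : ℕ} (E : Multiset (Fin n × Fin n)) (j : ℕ) : ℕ :=
  (E.filter (fun e => (e.2 : ℕ) = j)).card

/-- Number of 0-dimensional points dying at height `j` in the verbose diagram. -/
noncomputable def deaths0At {n : ℕ} (E : Multiset (Fin n × Fin n)) (j : ℕ) : ℕ :=
  Nat.card {v : Fin n // death0 E v = (j : ℕ∞)}

/-- Number of 1-dimensional classes born at height `j`: edges entering at height `j`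
that are creators rather than destructors. -/
noncomputable def cyclesBornAt {n : ℕ} (E : Multiset (Fin n × Fin n)) (j : ℕ) : ℕ :=
  edgesAt E j - deaths0At E j

/-- The graph with the vertical order reversed (for the down direction). -/
def flipE {n : ℕ} (E : Multiset (Fin n × Fin n)) : Multiset (Fin n × Fin n) :=
  E.map (fun e => (e.2.rev, e.1.rev))

/-- Equality of the verbose persistence diagrams in the up direction. -/
def UpDiagEq {n : ℕ} (E1 E2 : Multiset (Fin n × Fin n)) : Prop :=
  diag0 E1 = diag0 E2 ∧ ∀ j, cyclesBornAt E1 j = cyclesBornAt E2 j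

/-- Equality of VPHTs for vertical graphs: the verbose diagrams agree in both the
up and the down direction. -/
def VPHTEq {n : ℕ} (E1 E2 : Multiset (Fin n × Fin n)) : Prop :=
  UpDiagEq E1 E2 ∧ UpDiagEq (flipE E1) (flipE E2)

/-- Number of connected components of the multigraph with edge multiset `E`. -/
noncomputable def numComponents {n : ℕ} (E : Multiset (Fin n × Fin n)) : ℕ :=
  Nat.card (Quot (Reach E))

/-- The edge multiset `E` can be partitioned into cycles (closed trails). -/
def CircuitPartition {n : ℕ} (E : Multiset (Fin n × Fin n)) : Prop :=
  ∃ (k : ℕ) (len : Fin k → ℕ) (w : Fin k → ℕ → Fin n),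
    (∀ i, 0 < len i) ∧ (∀ i, w i (len i) = w i 0) ∧
    (∀ i, ∀ j < len i, w i j ≠ w i (j + 1)) ∧
    (∑ i, (Multiset.range (len i)).map (fun j => stepEdge (w i j) (w i (j + 1)))) = E

section AuxForests
variable {n : ℕ}

lemma ldeg_sum' {k : ℕ} (X : Fin k → Multiset (Fin n × Fin n)) (s : Finset (Fin k)) (v : Fin n) :
    ldeg (∑ i ∈ s, X i) v = ∑ i ∈ s, ldeg (X i) v := by
  classical
  induction s using Finset.induction_on with
  | empty => simp [ldeg]
  | insert _ _ h ih => rw [Finset.sum_insert h, Finset.sum_insert h, ← ih]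
                       simp [ldeg, Multiset.filter_add]

lemma ldeg_up_eq_down (C : AltCycle n) (v : Fin n) :
    ldeg C.upEdges v = ldeg C.downEdges v := by
  simp [ldeg, AltCycle.upEdges, AltCycle.downEdges, Multiset.filter_map, Function.comp]

lemma no_cycle_of_ldeg_le_one (F : Multiset (Fin n × Fin n))
    (hstrict : ∀ e ∈ F, e.1 < e.2) (h1 : ∀ v, ldeg F v ≤ 1) : ¬ HasCycle F := by
  rintro ⟨len, w, hlen, hclosed, hinj, hle⟩
  set f : ℕ → Fin n × Fin n := fun j => stepEdge (w j) (w (j + 1)) with hf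
  rcases Nat.lt_or_ge len 2 with h2 | h2
  · -- len = 1 : self loop
    interval_cases len
    have hmem : f 0 ∈ F := by
      apply Multiset.mem_of_le hle
      simp [f]
    rw [hf] at hmem
    simp only [zero_add, hclosed, stepEdge, lt_irrefl, if_false] at hmem
    exact absurd (hstrict _ hmem) (lt_irrefl _)
  · -- len ≥ 2 : take a maximal vertex
    obtain ⟨i, hi, hmax⟩ := (Finset.range len).exists_max_image w (by
      exact ⟨0, Finset.mem_range.2 hlen⟩)
    rw [Finset.mem_range] at hi
    set p : ℕ := if i = 0 then len - 1 else i - 1 with hp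
    have hplt : p < len := by rw [hp]; split <;> omega
    have hpne : p ≠ i := by rw [hp]; split <;> omega
    have hwp1 : w (p + 1) = w i := by
      rw [hp]; split
      · next h0 => rw [show len - 1 + 1 = len by omega, hclosed, h0]
      · next h0 => congr 1; omega
    have hlt : ∀ j < len, j ≠ i → w j < w i := fun j hj hne =>
      lt_of_le_of_ne (hmax j (Finset.mem_range.2 hj)) (fun he => hne (hinj j hj i hi he))
    have hwp : w p < w i := hlt p hplt hpne
    -- successor
    have hsucc : ∃ q < len, q ≠ i ∧ w (i + 1) = w q := by
      rcases Nat.lt_or_ge (i + 1) len with h | h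
      · exact ⟨i + 1, h, by omega, rfl⟩
      · refine ⟨0, hlen, by omega, ?_⟩
        rw [show i + 1 = len by omega, hclosed]
    obtain ⟨q, hqlt, hqne, hwq⟩ := hsucc
    have hwqlt : w (i + 1) < w i := hwq ▸ hlt q hqlt hqne
    -- both edges f p and f i have upper endpoint w i
    have hfp : f p = (w p, w i) := by
      simp only [f, stepEdge, hwp1, if_pos hwp]
    have hfi : f i = (w (i + 1), w i) := by
      simp only [f, stepEdge, if_neg (not_lt.2 (le_of_lt hwqlt))]
    -- the two-element sub-multiset
    have hsub : ({p, i} : Multiset ℕ) ≤ Multiset.range len := by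
      refine (Multiset.le_iff_subset ?_).2 ?_
      · simp [hpne]
      · intro x hx
        rcases Multiset.mem_cons.1 hx with rfl | hx
        · exact Multiset.mem_range.2 hplt
        · rw [Multiset.mem_singleton] at hx
          subst hx
          exact Multiset.mem_range.2 hi
    have hmle : ({f p, f i} : Multiset (Fin n × Fin n)) ≤ F :=
      le_trans (by simpa using Multiset.map_le_map (f := f) hsub) hle
    have h2le : (2 : ℕ) ≤ ldeg F (w i) := by
      have := Multiset.card_le_card
        (Multiset.filter_le_filter (fun e => e.2 = w i) hmle)
      simpa [hfp, hfi, ldeg, Multiset.filter_singleton] using this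
    exact absurd (h1 (w i)) (by omega)

lemma strict_up (k : ℕ) (Cs : Fin k → AltCycle n) :
    ∀ e ∈ ∑ i, (Cs i).upEdges, e.1 < e.2 := by
  intro e he
  rw [Multiset.mem_sum] at he
  obtain ⟨i, -, he⟩ := he
  simp only [AltCycle.upEdges, Multiset.mem_map, Multiset.mem_range] at he
  obtain ⟨j, hj, rfl⟩ := he
  exact (Cs i).up j hj

lemma strict_down (k : ℕ) (Cs : Fin k → AltCycle n) :
    ∀ e ∈ ∑ i, (Cs i).downEdges, e.1 < e.2 := by
  intro e he
  rw [Multiset.mem_sum] at he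
  obtain ⟨i, -, he⟩ := he
  simp only [AltCycle.downEdges, Multiset.mem_map, Multiset.mem_range] at he
  obtain ⟨j, hj, rfl⟩ := he
  exact (Cs i).down j hj

end AuxForests

/-- If a vertical multigraph with all `ldeg, hdeg ≤ 2` is partitioned
into alternating cycles, then the up-edge half `G₁` and down-edge half `G₂` are
forests (contain no cycle). -/
theorem halves_are_forests {n : ℕ} (E : Multiset (Fin n × Fin n))
    (k : ℕ) (Cs : Fin k → AltCycle n) (hpart : E = ∑ i, (Cs i).edges)
    (hl : ∀ v : Fin n, ldeg E v ≤ 2) (hh : ∀ v : Fin n, hdeg E v ≤ 2) :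
    ¬ HasCycle (∑ i, (Cs i).upEdges) ∧ ¬ HasCycle (∑ i, (Cs i).downEdges) := by
  classical
  have hkey : ∀ v, ldeg (∑ i, (Cs i).upEdges) v ≤ 1 ∧ ldeg (∑ i, (Cs i).downEdges) v ≤ 1 := by
    intro v
    have hed : ldeg E v = ldeg (∑ i, (Cs i).upEdges) v + ldeg (∑ i, (Cs i).downEdges) v := by
      rw [hpart]
      rw [ldeg_sum', ldeg_sum', ldeg_sum']
      rw [← Finset.sum_add_distrib]
      refine Finset.sum_congr rfl fun i _ => ?_
      simp [AltCycle.edges, ldeg, Multiset.filter_add]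
    have heq : ldeg (∑ i, (Cs i).upEdges) v = ldeg (∑ i, (Cs i).downEdges) v := by
      rw [ldeg_sum', ldeg_sum']
      exact Finset.sum_congr rfl fun i _ => ldeg_up_eq_down (Cs i) v
    have := hl v
    omega
  exact ⟨no_cycle_of_ldeg_le_one _ (strict_up k Cs) (fun v => (hkey v).1),
         no_cycle_of_ldeg_le_one _ (strict_down k Cs) (fun v => (hkey v).2)⟩
end

section
/- Let G_1 and G_2 be finite simple graphs on the same vertically ordered vertex set such that for every vertex v, ldeg_{G_1}(v) = ldeg_{G_2}(v) and hdeg_{G_1}(v) = hdeg_{G_2}(v). Then the multigraph G = G_1 ⊔ G_2 (disjoint union of edge sets over the common vertex set) has the property that every vertex has even ldeg_G and even hdeg_G, and hence its edge set can be partitioned into alternating cycles; i.e., (G_1, G_2) is a colliding pair. -/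
section Aux

variable {n : ℕ}

lemma ldeg_cons (x : Fin n × Fin n) (s : Multiset (Fin n × Fin n)) (v : Fin n) :
    ldeg (x ::ₘ s) v = (if x.2 = v then 1 else 0) + ldeg s v := by
  simp only [ldeg, Multiset.filter_cons]
  split_ifs <;> simp <;> omega

lemma hdeg_cons (x : Fin n × Fin n) (s : Multiset (Fin n × Fin n)) (v : Fin n) :
    hdeg (x ::ₘ s) v = (if x.1 = v then 1 else 0) + hdeg s v := by
  simp only [hdeg, Multiset.filter_cons]
  split_ifs <;> simp <;> omega

lemma ldeg_add' (s t : Multiset (Fin n × Fin n)) (v : Fin n) :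
    ldeg (s + t) v = ldeg s v + ldeg t v := by
  simp [ldeg, Multiset.filter_add]

lemma hdeg_add' (s t : Multiset (Fin n × Fin n)) (v : Fin n) :
    hdeg (s + t) v = hdeg s v + hdeg t v := by
  simp [hdeg, Multiset.filter_add]

/-- Key walk lemma: if all `ldeg` are even and `hdeg` is odd exactly on the symmetric
difference of `{a0}` and `{c}`, there is an alternating walk from `a0` to `c` whose
edges are contained in `R`. -/
lemma exists_alt_walk : ∀ (N : ℕ) (R : Multiset (Fin n × Fin n)), R.card ≤ N →
    (∀ e ∈ R, e.1 < e.2) → (∀ v, Even (ldeg R v)) →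
    ∀ (a0 c : Fin n),
    (∀ v, Even (hdeg R v + (if a0 = v then 1 else 0) + (if c = v then 1 else 0))) →
    ∃ (m : ℕ) (w : ℕ → Fin n), w 0 = a0 ∧ w (2*m) = c ∧
      (∀ j < m, w (2*j) < w (2*j+1)) ∧ (∀ j < m, w (2*j+2) < w (2*j+1)) ∧
      ((Multiset.range m).map (fun j => (w (2*j), w (2*j+1)))) +
      ((Multiset.range m).map (fun j => (w (2*j+2), w (2*j+1)))) ≤ R := by
  intro N
  induction N with
  | zero =>
    intro R hcard hlt hld a0 c hpar
    by_cases hac : c = a0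
    · exact ⟨0, fun _ => a0, rfl, hac.symm, by omega, by omega, by simp⟩
    · exfalso
      have hR : R = 0 := Multiset.card_eq_zero.mp (Nat.le_zero.mp hcard)
      have h := hpar c
      have hcc : (if c = c then 1 else 0) = 1 := if_pos rfl
      have ha0 : (if a0 = c then 1 else 0) = 0 := if_neg (fun h' => hac h'.symm)
      rw [hR, hcc, ha0, Nat.even_iff] at h
      simp only [hdeg, Multiset.filter_zero, Multiset.card_zero] at h
      omega
  | succ N ih =>
    intro R hcard hlt hld a0 c hpar
    by_cases hac : c = a0
    · exact ⟨0, fun _ => a0, rfl, hac.symm, by omega, by omega, by simp⟩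
    -- hdeg R c is odd, pick an up-edge e = (c, b) ∈ R
    have hodd : hdeg R c % 2 = 1 := by
      have h := hpar c
      have hcc : (if c = c then 1 else 0) = 1 := if_pos rfl
      have ha0 : (if a0 = c then 1 else 0) = 0 := if_neg (fun h' => hac h'.symm)
      rw [hcc, ha0, Nat.even_iff] at h
      omega
    have hne : (R.filter (fun e => e.1 = c)) ≠ 0 := by
      intro h0
      rw [hdeg, h0] at hodd
      simp at hodd
    obtain ⟨e, he⟩ := Multiset.exists_mem_of_ne_zero hne
    rw [Multiset.mem_filter] at he
    obtain ⟨heR, he1⟩ := he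
    set b := e.2 with hb
    have hcb : c < b := he1 ▸ hlt e heR
    set R1 := R.erase e with hR1def
    have hR1 : e ::ₘ R1 = R := Multiset.cons_erase heR
    -- ldeg R1 b is odd; pick a down-edge e' = (d, b) ∈ R1
    have hldR : ldeg R b = 1 + ldeg R1 b := by
      rw [← hR1, ldeg_cons, if_pos rfl]
    have hldodd : ldeg R1 b % 2 = 1 := by
      have h := hld b
      rw [Nat.even_iff] at h
      omega
    have hne' : (R1.filter (fun e => e.2 = b)) ≠ 0 := by
      intro h0
      rw [ldeg, h0] at hldodd
      simp at hldodd
    obtain ⟨e', he'⟩ := Multiset.exists_mem_of_ne_zero hne'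
    rw [Multiset.mem_filter] at he'
    obtain ⟨he'R1, he'2⟩ := he'
    set d := e'.1 with hd
    have he'R : e' ∈ R := Multiset.mem_of_le (Multiset.erase_le e R) he'R1
    have hdb : d < b := he'2 ▸ hlt e' he'R
    set R2 := R1.erase e' with hR2def
    have hR2 : e' ::ₘ R2 = R1 := Multiset.cons_erase he'R1
    -- apply induction hypothesis
    have hcard2 : R2.card ≤ N := by
      have : R.card = R2.card + 2 := by
        rw [← hR1, ← hR2]; simp
      omega
    have hlt2 : ∀ x ∈ R2, x.1 < x.2 := fun x hx =>
      hlt x (Multiset.mem_of_le (le_trans (Multiset.erase_le e' R1) (Multiset.erase_le e R)) hx)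
    have hldkey : ∀ v, ldeg R v = (if b = v then 1 else 0) + ((if b = v then 1 else 0) + ldeg R2 v) := by
      intro v
      rw [← hR1, ← hR2, ldeg_cons, ldeg_cons, ← hb, ← he'2]
    have hld2 : ∀ v, Even (ldeg R2 v) := by
      intro v
      have h := hld v
      rw [hldkey v, Nat.even_iff] at h
      rw [Nat.even_iff]
      split_ifs at h <;> omega
    have hhdkey : ∀ v, hdeg R v = (if c = v then 1 else 0) + ((if d = v then 1 else 0) + hdeg R2 v) := by
      intro v
      rw [← hR1, ← hR2, hdeg_cons, hdeg_cons, ← he1, ← hd]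
    have hpar2 : ∀ v, Even (hdeg R2 v + (if a0 = v then 1 else 0) + (if d = v then 1 else 0)) := by
      intro v
      have h := hpar v
      rw [hhdkey v, Nat.even_iff] at h
      rw [Nat.even_iff]
      split_ifs at h ⊢ <;> omega
    obtain ⟨m, w, hw0, hwm, hup, hdown, hle⟩ := ih R2 hcard2 hlt2 hld2 a0 d hpar2
    -- extend the walk by the pair d —(up e')→ b —(down e)→ c
    refine ⟨m + 1, fun k => if k ≤ 2*m then w k else if k = 2*m+1 then b else c,
      ?_, ?_, ?_, ?_, ?_⟩
    · simpa using hw0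
    · show (if 2*(m+1) ≤ 2*m then w (2*(m+1)) else if 2*(m+1) = 2*m+1 then b else c) = c
      rw [if_neg (by omega), if_neg (by omega)]
    · intro j hj
      rcases Nat.lt_succ_iff_lt_or_eq.mp hj with hj | hj
      · show (if 2*j ≤ 2*m then w (2*j) else _) < (if 2*j+1 ≤ 2*m then w (2*j+1) else _)
        rw [if_pos (by omega), if_pos (by omega)]
        exact hup j hj
      · subst hj
        show (if 2*j ≤ 2*j then w (2*j) else _) <
          (if 2*j+1 ≤ 2*j then w (2*j+1) else if 2*j+1 = 2*j+1 then b else c)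
        rw [if_pos le_rfl, if_neg (by omega), if_pos rfl, hwm]
        exact hdb
    · intro j hj
      rcases Nat.lt_succ_iff_lt_or_eq.mp hj with hj | hj
      · show (if 2*j+2 ≤ 2*m then w (2*j+2) else _) < (if 2*j+1 ≤ 2*m then w (2*j+1) else _)
        rw [if_pos (by omega), if_pos (by omega)]
        exact hdown j hj
      · subst hj
        show (if 2*j+2 ≤ 2*j then w (2*j+2) else if 2*j+2 = 2*j+1 then b else c) <
          (if 2*j+1 ≤ 2*j then w (2*j+1) else if 2*j+1 = 2*j+1 then b else c)
        rw [if_neg (by omega), if_neg (by omega), if_neg (by omega), if_pos rfl]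
        exact hcb
    · have hup_eq : (Multiset.range (m+1)).map
          (fun j => ((fun k => if k ≤ 2*m then w k else if k = 2*m+1 then b else c) (2*j),
            (fun k => if k ≤ 2*m then w k else if k = 2*m+1 then b else c) (2*j+1)))
          = e' ::ₘ (Multiset.range m).map (fun j => (w (2*j), w (2*j+1))) := by
        rw [Multiset.range_succ, Multiset.map_cons]
        congr 1
        · show ((if 2*m ≤ 2*m then w (2*m) else _), (if 2*m+1 ≤ 2*m then _ else if 2*m+1 = 2*m+1 then b else c)) = e'
          rw [if_pos le_rfl, if_neg (by omega), if_pos rfl, hwm]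
          all_goals exact Prod.ext hd.symm he'2.symm
        · refine Multiset.map_congr rfl (fun j hj => ?_)
          rw [Multiset.mem_range] at hj
          show ((if 2*j ≤ 2*m then w (2*j) else if 2*j = 2*m+1 then b else c),
            (if 2*j+1 ≤ 2*m then w (2*j+1) else if 2*j+1 = 2*m+1 then b else c)) = (w (2*j), w (2*j+1))
          rw [if_pos (by omega), if_pos (by omega)]
      have hdown_eq : (Multiset.range (m+1)).map
          (fun j => ((fun k => if k ≤ 2*m then w k else if k = 2*m+1 then b else c) (2*j+2),
            (fun k => if k ≤ 2*m then w k else if k = 2*m+1 then b else c) (2*j+1)))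
          = e ::ₘ (Multiset.range m).map (fun j => (w (2*j+2), w (2*j+1))) := by
        rw [Multiset.range_succ, Multiset.map_cons]
        congr 1
        · show ((if 2*m+2 ≤ 2*m then _ else if 2*m+2 = 2*m+1 then b else c),
            (if 2*m+1 ≤ 2*m then _ else if 2*m+1 = 2*m+1 then b else c)) = e
          rw [if_neg (by omega), if_neg (by omega), if_neg (by omega), if_pos rfl]
          all_goals exact Prod.ext he1.symm hb.symm
        · refine Multiset.map_congr rfl (fun j hj => ?_)
          rw [Multiset.mem_range] at hj
          show ((if 2*j+2 ≤ 2*m then w (2*j+2) else if 2*j+2 = 2*m+1 then b else c),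
            (if 2*j+1 ≤ 2*m then w (2*j+1) else if 2*j+1 = 2*m+1 then b else c)) = (w (2*j+2), w (2*j+1))
          rw [if_pos (by omega), if_pos (by omega)]
      rw [hup_eq, hdown_eq]
      have : e' ::ₘ (Multiset.range m).map (fun j => (w (2*j), w (2*j+1))) +
          (e ::ₘ (Multiset.range m).map (fun j => (w (2*j+2), w (2*j+1)))) =
          e ::ₘ e' ::ₘ ((Multiset.range m).map (fun j => (w (2*j), w (2*j+1))) +
            (Multiset.range m).map (fun j => (w (2*j+2), w (2*j+1)))) := by
        rw [Multiset.cons_add, Multiset.add_cons, Multiset.cons_swap]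
      rw [this, ← hR1, ← hR2]
      exact Multiset.cons_le_cons e (Multiset.cons_le_cons e' hle)

/-- From a nonempty edge multiset with all degrees even, extract an alternating cycle. -/
lemma exists_alt_cycle (E : Multiset (Fin n × Fin n)) (hE : E ≠ 0)
    (hlt : ∀ e ∈ E, e.1 < e.2)
    (hev : ∀ v, Even (ldeg E v) ∧ Even (hdeg E v)) :
    ∃ C : AltCycle n, C.edges ≤ E := by
  obtain ⟨e, heE⟩ := Multiset.exists_mem_of_ne_zero hE
  set a := e.1 with ha
  set b := e.2 with hb
  have hab : a < b := hlt e heE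
  set R1 := E.erase e with hR1def
  have hR1 : e ::ₘ R1 = E := Multiset.cons_erase heE
  have hldodd : ldeg R1 b % 2 = 1 := by
    have h := (hev b).1
    rw [← hR1, ldeg_cons, ← hb, if_pos rfl, Nat.even_iff] at h
    omega
  have hne' : (R1.filter (fun e => e.2 = b)) ≠ 0 := by
    intro h0
    rw [ldeg, h0] at hldodd
    simp at hldodd
  obtain ⟨e', he'⟩ := Multiset.exists_mem_of_ne_zero hne'
  rw [Multiset.mem_filter] at he'
  obtain ⟨he'R1, he'2⟩ := he'
  set d := e'.1 with hd
  have he'E : e' ∈ E := Multiset.mem_of_le (Multiset.erase_le e E) he'R1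
  have hdb : d < b := he'2 ▸ hlt e' he'E
  set R2 := R1.erase e' with hR2def
  have hR2 : e' ::ₘ R2 = R1 := Multiset.cons_erase he'R1
  have hlt2 : ∀ x ∈ R2, x.1 < x.2 := fun x hx =>
    hlt x (Multiset.mem_of_le (le_trans (Multiset.erase_le e' R1) (Multiset.erase_le e E)) hx)
  have hldkey : ∀ v, ldeg E v = (if b = v then 1 else 0) + ((if b = v then 1 else 0) + ldeg R2 v) := by
    intro v
    rw [← hR1, ← hR2, ldeg_cons, ldeg_cons, ← hb, ← he'2]
  have hld2 : ∀ v, Even (ldeg R2 v) := by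
    intro v
    have h := (hev v).1
    rw [hldkey v, Nat.even_iff] at h
    rw [Nat.even_iff]
    split_ifs at h <;> omega
  have hhdkey : ∀ v, hdeg E v = (if a = v then 1 else 0) + ((if d = v then 1 else 0) + hdeg R2 v) := by
    intro v
    rw [← hR1, ← hR2, hdeg_cons, hdeg_cons, ← ha, ← hd]
  have hpar2 : ∀ v, Even (hdeg R2 v + (if d = v then 1 else 0) + (if a = v then 1 else 0)) := by
    intro v
    have h := (hev v).2
    rw [hhdkey v, Nat.even_iff] at h
    rw [Nat.even_iff]
    split_ifs at h ⊢ <;> omega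
  obtain ⟨m, w, hw0, hwm, hup, hdown, hle⟩ :=
    exists_alt_walk R2.card R2 le_rfl hlt2 hld2 d a hpar2
  -- build the cycle: d →(walk)→ a →(up e)→ b →(down e')→ d
  refine ⟨⟨m + 1, by omega,
    fun k => if k ≤ 2*m then w k else if k = 2*m+1 then b else d, ?_, ?_, ?_⟩, ?_⟩
  · show (if 2*(m+1) ≤ 2*m then _ else if 2*(m+1) = 2*m+1 then b else d) =
      (if 0 ≤ 2*m then w 0 else _)
    rw [if_neg (by omega), if_neg (by omega), if_pos (by omega), hw0]
  · intro j hj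
    rcases Nat.lt_succ_iff_lt_or_eq.mp hj with hj | hj
    · show (if 2*j ≤ 2*m then w (2*j) else _) < (if 2*j+1 ≤ 2*m then w (2*j+1) else _)
      rw [if_pos (by omega), if_pos (by omega)]
      exact hup j hj
    · subst hj
      show (if 2*j ≤ 2*j then w (2*j) else _) <
        (if 2*j+1 ≤ 2*j then _ else if 2*j+1 = 2*j+1 then b else d)
      rw [if_pos le_rfl, if_neg (by omega), if_pos rfl, hwm]
      exact hab
  · intro j hj
    rcases Nat.lt_succ_iff_lt_or_eq.mp hj with hj | hj
    · show (if 2*j+2 ≤ 2*m then w (2*j+2) else _) < (if 2*j+1 ≤ 2*m then w (2*j+1) else _)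
      rw [if_pos (by omega), if_pos (by omega)]
      exact hdown j hj
    · subst hj
      show (if 2*j+2 ≤ 2*j then _ else if 2*j+2 = 2*j+1 then b else d) <
        (if 2*j+1 ≤ 2*j then _ else if 2*j+1 = 2*j+1 then b else d)
      rw [if_neg (by omega), if_neg (by omega), if_neg (by omega), if_pos rfl]
      exact hdb
  · show AltCycle.edges _ ≤ E
    unfold AltCycle.edges AltCycle.upEdges AltCycle.downEdges
    simp only
    have hup_eq : (Multiset.range (m+1)).map
        (fun j => ((fun k => if k ≤ 2*m then w k else if k = 2*m+1 then b else d) (2*j),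
          (fun k => if k ≤ 2*m then w k else if k = 2*m+1 then b else d) (2*j+1)))
        = e ::ₘ (Multiset.range m).map (fun j => (w (2*j), w (2*j+1))) := by
      rw [Multiset.range_succ, Multiset.map_cons]
      congr 1
      · show ((if 2*m ≤ 2*m then w (2*m) else _),
          (if 2*m+1 ≤ 2*m then _ else if 2*m+1 = 2*m+1 then b else d)) = e
        rw [if_pos le_rfl, if_neg (by omega), if_pos rfl, hwm]
        all_goals exact Prod.ext ha.symm hb.symm
      · refine Multiset.map_congr rfl (fun j hj => ?_)
        rw [Multiset.mem_range] at hj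
        show ((if 2*j ≤ 2*m then w (2*j) else if 2*j = 2*m+1 then b else d),
          (if 2*j+1 ≤ 2*m then w (2*j+1) else if 2*j+1 = 2*m+1 then b else d)) = (w (2*j), w (2*j+1))
        rw [if_pos (by omega), if_pos (by omega)]
    have hdown_eq : (Multiset.range (m+1)).map
        (fun j => ((fun k => if k ≤ 2*m then w k else if k = 2*m+1 then b else d) (2*j+2),
          (fun k => if k ≤ 2*m then w k else if k = 2*m+1 then b else d) (2*j+1)))
        = e' ::ₘ (Multiset.range m).map (fun j => (w (2*j+2), w (2*j+1))) := by
      rw [Multiset.range_succ, Multiset.map_cons]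
      congr 1
      · show ((if 2*m+2 ≤ 2*m then _ else if 2*m+2 = 2*m+1 then b else d),
          (if 2*m+1 ≤ 2*m then _ else if 2*m+1 = 2*m+1 then b else d)) = e'
        rw [if_neg (by omega), if_neg (by omega), if_neg (by omega), if_pos rfl]
        all_goals exact Prod.ext hd.symm he'2.symm
      · refine Multiset.map_congr rfl (fun j hj => ?_)
        rw [Multiset.mem_range] at hj
        show ((if 2*j+2 ≤ 2*m then w (2*j+2) else if 2*j+2 = 2*m+1 then b else d),
          (if 2*j+1 ≤ 2*m then w (2*j+1) else if 2*j+1 = 2*m+1 then b else d)) = (w (2*j+2), w (2*j+1))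
        rw [if_pos (by omega), if_pos (by omega)]
    rw [hup_eq, hdown_eq]
    have heq : e ::ₘ (Multiset.range m).map (fun j => (w (2*j), w (2*j+1))) +
        (e' ::ₘ (Multiset.range m).map (fun j => (w (2*j+2), w (2*j+1)))) =
        e ::ₘ e' ::ₘ ((Multiset.range m).map (fun j => (w (2*j), w (2*j+1))) +
          (Multiset.range m).map (fun j => (w (2*j+2), w (2*j+1)))) := by
      rw [Multiset.cons_add, Multiset.add_cons]
    rw [heq, ← hR1, ← hR2]
    exact Multiset.cons_le_cons e (Multiset.cons_le_cons e' hle)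

lemma countP_shift (f : ℕ → Fin n) (v : Fin n) : ∀ m : ℕ,
    ((Multiset.range m).countP (fun j => f (j+1) = v)) + (if f 0 = v then 1 else 0) =
    ((Multiset.range m).countP (fun j => f j = v)) + (if f m = v then 1 else 0) := by
  intro m
  induction m with
  | zero => simp
  | succ m ihm =>
    rw [Multiset.range_succ, Multiset.countP_cons, Multiset.countP_cons]
    split_ifs at ihm ⊢ <;> omega

lemma ldeg_cycle_even (C : AltCycle n) (v : Fin n) : Even (ldeg C.edges v) := by
  rw [AltCycle.edges, ldeg_add']
  have h1 : ldeg C.upEdges v = (Multiset.range C.m).countP (fun j => C.w (2*j+1) = v) := by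
    rw [ldeg, AltCycle.upEdges, ← Multiset.countP_eq_card_filter, Multiset.countP_map]
    simp [Multiset.countP_eq_card_filter]
  have h2 : ldeg C.downEdges v = (Multiset.range C.m).countP (fun j => C.w (2*j+1) = v) := by
    rw [ldeg, AltCycle.downEdges, ← Multiset.countP_eq_card_filter, Multiset.countP_map]
    simp [Multiset.countP_eq_card_filter]
  rw [h1, h2]
  exact ⟨_, rfl⟩

lemma hdeg_cycle_even (C : AltCycle n) (v : Fin n) : Even (hdeg C.edges v) := by
  rw [AltCycle.edges, hdeg_add']
  have h1 : hdeg C.upEdges v = (Multiset.range C.m).countP (fun j => C.w (2*j) = v) := by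
    rw [hdeg, AltCycle.upEdges, ← Multiset.countP_eq_card_filter, Multiset.countP_map]
    simp [Multiset.countP_eq_card_filter]
  have h2 : hdeg C.downEdges v = (Multiset.range C.m).countP (fun j => C.w (2*(j+1)) = v) := by
    rw [hdeg, AltCycle.downEdges, ← Multiset.countP_eq_card_filter, Multiset.countP_map]
    simp [Multiset.countP_eq_card_filter, Nat.mul_succ]
  have hshift := countP_shift (fun j => C.w (2*j)) v C.m
  have hc : C.w (2*C.m) = C.w (2*0) := by rw [C.closed, Nat.mul_zero]
  rw [hc] at hshift
  have hXA := Nat.add_right_cancel hshift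
  rw [h1, h2, hXA]
  exact ⟨_, rfl⟩

lemma alt_partition_of_even : ∀ (N : ℕ) (E : Multiset (Fin n × Fin n)), E.card ≤ N →
    (∀ e ∈ E, e.1 < e.2) → (∀ v, Even (ldeg E v) ∧ Even (hdeg E v)) →
    AltPartition E := by
  intro N
  induction N with
  | zero =>
    intro E hcard _ _
    have : E = 0 := Multiset.card_eq_zero.mp (Nat.le_zero.mp hcard)
    exact ⟨0, Fin.elim0, by simp [this]⟩
  | succ N ih =>
    intro E hcard hlt hev
    by_cases hE : E = 0
    · exact ⟨0, Fin.elim0, by simp [hE]⟩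
    obtain ⟨C, hC⟩ := exists_alt_cycle E hE hlt hev
    set E' := E - C.edges with hE'def
    have hsum : E' + C.edges = E := tsub_add_cancel_of_le hC
    have hcpos : 0 < Multiset.card C.edges := by
      rw [AltCycle.edges, AltCycle.upEdges]
      simp only [Multiset.card_add, Multiset.card_map, Multiset.card_range]
      have := C.pos
      omega
    have hcard' : E'.card ≤ N := by
      have : E.card = E'.card + Multiset.card C.edges := by
        rw [← hsum, Multiset.card_add]
      omega
    have hlt' : ∀ e ∈ E', e.1 < e.2 := fun e he =>
      hlt e (Multiset.mem_of_le (hsum ▸ Multiset.le_add_right E' C.edges) he)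
    have hev' : ∀ v, Even (ldeg E' v) ∧ Even (hdeg E' v) := by
      intro v
      have hl : ldeg E v = ldeg E' v + ldeg C.edges v := by rw [← hsum, ldeg_add']
      have hh : hdeg E v = hdeg E' v + hdeg C.edges v := by rw [← hsum, hdeg_add']
      have h1 := (hev v).1
      have h2 := (hev v).2
      have h3 := ldeg_cycle_even C v
      have h4 := hdeg_cycle_even C v
      rw [hl, Nat.even_iff] at h1
      rw [hh, Nat.even_iff] at h2
      rw [Nat.even_iff] at h3 h4
      constructor <;> rw [Nat.even_iff] <;> omega
    obtain ⟨k, Cs, hCs⟩ := ih E' hcard' hlt' hev'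
    refine ⟨k + 1, Fin.cons C Cs, ?_⟩
    rw [Fin.sum_univ_succ]
    simp only [Fin.cons_zero, Fin.cons_succ]
    rw [← hCs, ← hsum]
    exact add_comm _ _

end Aux

/-- If two vertical graphs on the same vertex set have equal `ldeg`
and equal `hdeg` at every vertex, then their disjoint union has all `ldeg` and
`hdeg` even, and hence can be partitioned into alternating cycles — the pair is a
colliding pair. -/
theorem equal_degrees_colliding_pair {n : ℕ} (E1 E2 : Finset (Fin n × Fin n))
    (h1 : ∀ e ∈ E1, e.1 < e.2) (h2 : ∀ e ∈ E2, e.1 < e.2)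
    (hdegs : ∀ v : Fin n, ldeg E1.val v = ldeg E2.val v ∧ hdeg E1.val v = hdeg E2.val v) :
    (∀ v : Fin n, Even (ldeg (E1.val + E2.val) v) ∧ Even (hdeg (E1.val + E2.val) v)) ∧
      AltPartition (E1.val + E2.val) := by
  have heven : ∀ v : Fin n, Even (ldeg (E1.val + E2.val) v) ∧ Even (hdeg (E1.val + E2.val) v) := by
    intro v
    rw [ldeg_add', hdeg_add', (hdegs v).1, (hdegs v).2]
    exact ⟨⟨_, rfl⟩, ⟨_, rfl⟩⟩
  refine ⟨heven, ?_⟩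
  refine alt_partition_of_even (E1.val + E2.val).card _ le_rfl ?_ heven
  intro e he
  rw [Multiset.mem_add] at he
  rcases he with he | he
  · exact h1 e he
  · exact h2 e he
end
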